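/- Let (T,⊗) be an M-compatible tensor triangulated category and let (L_i)_{i∈I} be a family of ⊗-invertible objects of T such that the smallest thick subcategory containing all finite tensor products ⊗_{i} L_i^{⊗ d_i} (where d = (d_i) ranges over finitely supported integer tuples, negative powers meaning powers of the inverse) is T itself. Then a thick subcategory P of T is a prime ⊗-ideal if and only if P is a prime thick subcategory satisfying τ_{L_i}⁻¹(P) = P for every i ∈ I. -/

import Mathlib

open CategoryTheory Limits Pretriangulated MonoidalCategory

universe v u

namespace PaperTT

variable (C : Type u) [Category.{v} C] [HasZeroObject C] [HasShift C ℤ]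
  [Preadditive C] [∀ n : ℤ, (shiftFunctor C n).Additive] [Pretriangulated C]

/-- A thick subcategory of a (pre)triangulated category, encoded as the set of its objects:
it contains the zero objects, is closed under isomorphisms, shifts, extensions
(two-out-of-three for distinguished triangles) and direct summands (retracts). -/
def IsThickSubcategory (S : Set C) : Prop :=
  (∀ Z : C, IsZero Z → Z ∈ S) ∧
  (∀ ⦃X Y : C⦄, (X ≅ Y) → X ∈ S → Y ∈ S) ∧
  (∀ (X : C) (n : ℤ), X ∈ S → (shiftFunctor C n).obj X ∈ S) ∧
  (∀ T ∈ distTriang C, T.obj₁ ∈ S → T.obj₃ ∈ S → T.obj₂ ∈ S) ∧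
  (∀ (X Y : C) (i : X ⟶ Y) (r : Y ⟶ X), i ≫ r = 𝟙 X → Y ∈ S → X ∈ S)

/-- A prime thick subcategory: a thick subcategory `S` such that the poset of thick
subcategories strictly containing `S` has a smallest element. -/
def IsPrimeThickSubcategory (S : Set C) : Prop :=
  IsThickSubcategory C S ∧
    ∃ Q : Set C, IsThickSubcategory C Q ∧ S ⊂ Q ∧
      ∀ R : Set C, IsThickSubcategory C R → S ⊂ R → Q ⊆ R

variable [MonoidalCategory C]

/-- The ⊗-ideal condition for a subcategory: `M ⊗ N ∈ S` for all `M` and all `N ∈ S`. -/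
def IsTensorIdealSet (S : Set C) : Prop :=
  ∀ (M N : C), N ∈ S → M ⊗ N ∈ S

/-- A thick ⊗-ideal. -/
def IsTensorIdeal (S : Set C) : Prop :=
  IsThickSubcategory C S ∧ IsTensorIdealSet C S

/-- A prime ⊗-ideal: a proper thick ⊗-ideal `S` with `M ⊗ N ∈ S → M ∈ S ∨ N ∈ S`. -/
def IsPrimeTensorIdeal (S : Set C) : Prop :=
  IsTensorIdeal C S ∧ S ≠ Set.univ ∧ ∀ (M N : C), M ⊗ N ∈ S → M ∈ S ∨ N ∈ S

/-- `M`-compatibility: a thick subcategory is a prime ⊗-ideal iff it is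
a prime thick subcategory that is a ⊗-ideal. -/
def MCompatible : Prop :=
  ∀ S : Set C, IsPrimeTensorIdeal C S ↔
    (IsPrimeThickSubcategory C S ∧ IsTensorIdealSet C S)

/-- Nonnegative tensor powers of an object; `npow L 0 = 𝟙_ C`. -/
def npow (L : C) : ℕ → C
  | 0 => 𝟙_ C
  | n + 1 => npow L n ⊗ L

/-- Integer tensor powers of an object `L`, the negative powers being the positive
powers of a chosen tensor inverse `L'` of `L`. -/
def zpow (L L' : C) : ℤ → C
  | Int.ofNat n => npow C L n
  | Int.negSucc n => npow C L' (n + 1)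

/-- The finite tensor product `⊗_i L_i^{⊗ d_i}` attached to a finitely supported integer
tuple `d : ι →₀ ℤ`, the negative powers of `L i` being the positive powers of its chosen
tensor inverse `L' i`; the product is taken over the support of `d` (in some order). -/
noncomputable def finsuppTensorProd {ι : Type*} (L L' : ι → C) (d : ι →₀ ℤ) : C :=
  (d.support.toList.map fun i => zpow C (L i) (L' i) (d i)).foldr (· ⊗ ·) (𝟙_ C)


section Aux

variable {C}
variable [MonoidalCategory C] [SymmetricCategory C]

/-- Auxiliary: thickness of the preimage of a thick subcategory under `tensorRight N`. -/
lemma isThickSubcategory_preimage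
    [∀ N : C, (tensorRight N).CommShift ℤ] [∀ N : C, (tensorRight N).IsTriangulated]
    {P : Set C} (hP : IsThickSubcategory C P) (N : C) :
    IsThickSubcategory C {M : C | M ⊗ N ∈ P} := by
  obtain ⟨h0, hiso, hshift, hext, hretr⟩ := hP
  refine ⟨?_, ?_, ?_, ?_, ?_⟩
  · intro Z hZ
    refine h0 _ ?_
    rw [IsZero.iff_id_eq_zero] at hZ ⊢
    have h : (tensorRight N).map (𝟙 Z) = 0 := by
      rw [hZ, CategoryTheory.Functor.map_zero]
    rw [CategoryTheory.Functor.map_id] at h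
    exact h
  · intro X Y f hX
    exact hiso ((tensorRight N).mapIso f) hX
  · intro X n hX
    exact hiso (((tensorRight N).commShiftIso n).app X).symm (hshift (X ⊗ N) n hX)
  · intro T hT h1 h3
    exact hext _ ((tensorRight N).map_distinguished T hT) h1 h3
  · intro X Y i r hir hY
    refine hretr (X ⊗ N) (Y ⊗ N) ((tensorRight N).map i) ((tensorRight N).map r) ?_ hY
    rw [← CategoryTheory.Functor.map_comp, hir, CategoryTheory.Functor.map_id]
    rfl

/-- Auxiliary: objects `M` such that `M ⊗ - ` preserves membership in `P`. -/
def Absorbs (P : Set C) (M : C) : Prop := ∀ N ∈ P, M ⊗ N ∈ P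

lemma absorbs_tensor {P : Set C} (hiso : ∀ ⦃X Y : C⦄, (X ≅ Y) → X ∈ P → Y ∈ P)
    {A B : C} (hA : Absorbs P A) (hB : Absorbs P B) : Absorbs P (A ⊗ B) := by
  intro N hN
  exact hiso (α_ A B N).symm (hA _ (hB _ hN))

lemma absorbs_unit {P : Set C} (hiso : ∀ ⦃X Y : C⦄, (X ≅ Y) → X ∈ P → Y ∈ P) :
    Absorbs P (𝟙_ C) := fun N hN => hiso (λ_ N).symm hN

end Aux

/-- Let `(C,⊗)` be an `M`-compatible symmetric tensor triangulated category
(the tensor product being triangulated in each variable) and let `(L i)` be a family of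
⊗-invertible objects (with chosen inverses `L' i`) such that the smallest thick subcategory
containing all finite tensor products `⊗_i (L i)^(d i)`, for `d` a finitely supported integer
tuple, is all of `C`.  Then a thick subcategory `P` is a prime ⊗-ideal if and only if it is a
prime thick subcategory fixed by every autoequivalence `τ_{L i} = - ⊗ L i`. -/
theorem balmer_spectrum_eq_pt_spectrum_of_multi_polarization
    (C : Type u) [Category.{v} C] [HasZeroObject C] [HasShift C ℤ]
    [Preadditive C] [∀ n : ℤ, (shiftFunctor C n).Additive] [Pretriangulated C]
    [MonoidalCategory C] [SymmetricCategory C]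
    [∀ N : C, (tensorLeft N).CommShift ℤ] [∀ N : C, (tensorLeft N).IsTriangulated]
    [∀ N : C, (tensorRight N).CommShift ℤ] [∀ N : C, (tensorRight N).IsTriangulated]
    (hM : MCompatible C)
    {ι : Type*} (L L' : ι → C) (e : ∀ i, L i ⊗ L' i ≅ 𝟙_ C)
    (hgen : ∀ S : Set C, IsThickSubcategory C S →
      (∀ d : ι →₀ ℤ, finsuppTensorProd C L L' d ∈ S) → S = Set.univ)
    (P : Set C) :
    IsPrimeTensorIdeal C P ↔
      (IsPrimeThickSubcategory C P ∧ ∀ i : ι, {M : C | M ⊗ L i ∈ P} = P) := by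
  constructor
  · rintro ⟨⟨hthick, hideal⟩, hproper, hprime⟩
    refine ⟨((hM P).mp ⟨⟨hthick, hideal⟩, hproper, hprime⟩).1, fun i => ?_⟩
    ext M
    simp only [Set.mem_setOf_eq]
    constructor
    · intro hMLi
      have h1 : L' i ⊗ (M ⊗ L i) ∈ P := hideal _ _ hMLi
      refine hthick.2.1 ?_ h1
      calc L' i ⊗ (M ⊗ L i) ≅ (M ⊗ L i) ⊗ L' i := β_ _ _
        _ ≅ M ⊗ (L i ⊗ L' i) := α_ _ _ _
        _ ≅ M ⊗ 𝟙_ C := whiskerLeftIso M (e i)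
        _ ≅ M := ρ_ M
    · intro hMP
      exact hthick.2.1 (β_ (L i) M) (hideal _ _ hMP)
  · rintro ⟨hPprime, hfix⟩
    have hthick : IsThickSubcategory C P := hPprime.1
    have hiso := hthick.2.1
    -- `L i` and `L' i` absorb `P`
    have hAbsL : ∀ i, Absorbs P (L i) := by
      intro i N hN
      have : N ∈ {M : C | M ⊗ L i ∈ P} := (hfix i).symm ▸ hN
      exact hiso (β_ N (L i)) this
    have hAbsL' : ∀ i, Absorbs P (L' i) := by
      intro i N hN
      have key : (N ⊗ L' i) ⊗ L i ∈ P := by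
        refine hiso ?_ hN
        calc N ≅ N ⊗ 𝟙_ C := (ρ_ N).symm
          _ ≅ N ⊗ (L i ⊗ L' i) := whiskerLeftIso N (e i).symm
          _ ≅ N ⊗ (L' i ⊗ L i) := whiskerLeftIso N (β_ (L i) (L' i))
          _ ≅ (N ⊗ L' i) ⊗ L i := (α_ _ _ _).symm
      have : N ⊗ L' i ∈ {M : C | M ⊗ L i ∈ P} := key
      rw [hfix i] at this
      exact hiso (β_ N (L' i)) this
    have hAbsNpow : ∀ (X : C), Absorbs P X → ∀ n : ℕ, Absorbs P (npow C X n) := by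
      intro X hX n
      induction n with
      | zero => exact absorbs_unit hiso
      | succ n ih => exact absorbs_tensor hiso ih hX
    have hAbsZpow : ∀ (i : ι) (k : ℤ), Absorbs P (zpow C (L i) (L' i) k) := by
      intro i k
      cases k with
      | ofNat n => exact hAbsNpow _ (hAbsL i) n
      | negSucc n => exact hAbsNpow _ (hAbsL' i) (n + 1)
    have hAbsList : ∀ l : List C, (∀ x ∈ l, Absorbs P x) →
        Absorbs P (l.foldr (· ⊗ ·) (𝟙_ C)) := by
      intro l hl
      induction l with
      | nil => exact absorbs_unit hiso
      | cons a l ih =>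
        exact absorbs_tensor hiso (hl a List.mem_cons_self)
          (ih fun x hx => hl x (List.mem_cons_of_mem a hx))
    have hAbsGen : ∀ d : ι →₀ ℤ, Absorbs P (finsuppTensorProd C L L' d) := by
      intro d
      refine hAbsList _ ?_
      intro x hx
      simp only [List.mem_map] at hx
      obtain ⟨i, _, rfl⟩ := hx
      exact hAbsZpow i (d i)
    -- `P` is a tensor ideal
    have hideal : IsTensorIdealSet C P := by
      intro M N hN
      have hS : IsThickSubcategory C {M : C | M ⊗ N ∈ P} :=
        isThickSubcategory_preimage hthick N
      have hSuniv : {M : C | M ⊗ N ∈ P} = Set.univ :=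
        hgen _ hS (fun d => hAbsGen d N hN)
      have : M ∈ {M : C | M ⊗ N ∈ P} := hSuniv ▸ Set.mem_univ M
      exact this
    exact (hM P).mpr ⟨hPprime, hideal⟩

end PaperTT
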